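/- The two-sided infinite Thue-Morse word u : ℤ → Fin 2, defined by u(n) = t(n) for n ≥ 0 and u(n) = t(-1-n) for n < 0, is overlap-free: there is no i ∈ ℤ and n ≥ 1 with u(i+j) = u(i+n+j) for all 0 ≤ j ≤ n. -/

import Mathlib

/-- Thue-Morse sequence: parity of number of 1 bits of n. -/
def t (n : ℕ) : Fin 2 := ⟨(Nat.digits 2 n).sum % 2, Nat.mod_lt _ (by norm_num)⟩

/-- Two-sided Thue-Morse word. -/
def u (n : ℤ) : Fin 2 := if 0 ≤ n then t n.toNat else t (-1 - n).toNat

/-- Binary digit sum. -/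
def s (n : ℕ) : ℕ := (Nat.digits 2 n).sum

lemma s_rec (n : ℕ) : s n = n % 2 + s (n / 2) := by
  rcases n with _ | n
  · simp [s]
  · rw [s, Nat.digits_def' (by norm_num : 1 < 2) (Nat.succ_pos n), List.sum_cons, s]

lemma s_even (m : ℕ) : s (2 * m) = s m := by
  rw [s_rec, Nat.mul_mod_right, Nat.mul_div_cancel_left _ (by norm_num : 0 < 2)]; omega

lemma s_odd (m : ℕ) : s (2 * m + 1) = 1 + s m := by
  rw [s_rec, Nat.mul_add_mod, Nat.mul_add_div (by norm_num)]; norm_num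

/-- One-sided Thue-Morse is overlap-free (stated at digit-sum-parity level). -/
lemma tm_overlap_free : ∀ n : ℕ, 1 ≤ n → ∀ i : ℕ,
    ¬ (∀ j ≤ n, s (i + j) % 2 = s (i + n + j) % 2) := by
  intro n
  induction n using Nat.strong_induction_on with
  | _ n IH =>
    intro hn i H
    rcases Nat.even_or_odd n with ⟨m, hm⟩ | ⟨m, hm⟩
    · -- even case: n = 2m, reduce to period m
      have hm1 : 1 ≤ m := by omega
      rcases Nat.even_or_odd i with ⟨a, ha⟩ | ⟨a, ha⟩
      · apply IH m (by omega) hm1 a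
        intro l hl
        have h := H (2 * l) (by omega)
        have e1 : i + 2 * l = 2 * (a + l) := by omega
        have e2 : i + n + 2 * l = 2 * (a + m + l) := by omega
        rw [e1, e2, s_even, s_even] at h
        exact h
      · apply IH m (by omega) hm1 a
        intro l hl
        have h := H (2 * l) (by omega)
        have e1 : i + 2 * l = 2 * (a + l) + 1 := by omega
        have e2 : i + n + 2 * l = 2 * (a + m + l) + 1 := by omega
        rw [e1, e2, s_odd, s_odd] at h
        omega
    · -- odd case: n = 2m+1, the segment must alternate, contradiction
      have hflip : ∀ j, j < n → s (i + j) % 2 ≠ s (i + j + 1) % 2 := by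
        intro j hj
        rcases Nat.even_or_odd (i + j) with ⟨c, hc⟩ | ⟨c, hc⟩
        · have e1 : i + j = 2 * c := by omega
          rw [e1, s_even, s_odd]; omega
        · have h1 := H j (by omega)
          have h2 := H (j + 1) (by omega)
          have e0 : i + (j + 1) = i + j + 1 := by omega
          have e0' : i + n + (j + 1) = i + n + j + 1 := by omega
          rw [e0] at h2; rw [e0'] at h2
          have e1 : i + n + j = 2 * (c + m + 1) := by omega
          rw [e1, s_even] at h1
          rw [e1, s_odd] at h2
          omega
      have key : ∀ j ≤ n, s (i + j) % 2 = (s i % 2 + j) % 2 := by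
        intro j hj
        induction j with
        | zero => simp
        | succ j ih =>
          have h1 := ih (by omega)
          have h2 := hflip j (by omega)
          have e0 : i + (j + 1) = i + j + 1 := by omega
          rw [e0]
          omega
      have h0 := H 0 (by omega)
      have hn' := key n le_rfl
      simp only [Nat.add_zero] at h0
      omega

lemma s_pow_add : ∀ j : ℕ, ∀ M < 2 ^ j, s (2 ^ j + M) = 1 + s M := by
  intro j
  induction j with
  | zero =>
    intro M hM
    interval_cases M
    rw [s_rec]
    simp [s]
  | succ j ih =>
    intro M hM
    have h1 : s (2 ^ (j + 1) + M) = M % 2 + s (2 ^ j + M / 2) := by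
      rw [s_rec]
      congr 1
      · have : 2 ^ (j + 1) + M = 2 * (2 ^ j) + M := by ring_nf
        omega
      · congr 1
        have : 2 ^ (j + 1) = 2 * 2 ^ j := by ring
        omega
    have h2 : M / 2 < 2 ^ j := by
      have : 2 ^ (j + 1) = 2 * 2 ^ j := by ring
      omega
    rw [h1, ih _ h2, s_rec M]
    omega

lemma s_compl : ∀ j : ℕ, ∀ M < 2 ^ j, s (2 ^ j - 1 - M) + s M = j := by
  intro j
  induction j with
  | zero =>
    intro M hM
    interval_cases M
    simp [s]
  | succ j ih =>
    intro M hM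
    have hp : 2 ^ (j + 1) = 2 * 2 ^ j := by ring
    have h2 : M / 2 < 2 ^ j := by omega
    have hKd : (2 ^ (j + 1) - 1 - M) / 2 = 2 ^ j - 1 - M / 2 := by omega
    have hKm : (2 ^ (j + 1) - 1 - M) % 2 = 1 - M % 2 := by omega
    rw [s_rec (2 ^ (j + 1) - 1 - M), hKd, hKm, s_rec M]
    have := ih _ h2
    omega

lemma u_val (m : ℤ) :
    (u m).val = if 0 ≤ m then s m.toNat % 2 else s (-1 - m).toNat % 2 := by
  unfold u
  split <;> rfl

/-- In any window `[-4^k, 2·4^k)`, `u m` is the complement of `t (m + 2·4^k)`. -/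
lemma u_embed (k : ℕ) (m : ℤ) (h1 : -(4 ^ k : ℤ) ≤ m) (h2 : m < 2 * 4 ^ k) :
    (u m).val ≠ s ((m + 2 * 4 ^ k).toNat) % 2 := by
  have h4 : (4 : ℤ) ^ k = ((2 ^ (2 * k) : ℕ) : ℤ) := by
    push_cast
    rw [pow_mul]
    norm_num
  set a : ℕ := 2 ^ (2 * k) with ha
  have hpp : 2 ^ (2 * k + 1) = 2 * a := by rw [ha]; ring
  rw [u_val]
  split
  · -- m ≥ 0
    rename_i hm
    have e1 : (m + 2 * 4 ^ k).toNat = 2 ^ (2 * k + 1) + m.toNat := by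
      rw [h4]; omega
    have hMlt : m.toNat < 2 ^ (2 * k + 1) := by rw [hpp]; omega
    rw [e1, s_pow_add _ _ hMlt]
    omega
  · -- m < 0
    rename_i hm
    have e1 : (m + 2 * 4 ^ k).toNat = 2 ^ (2 * k + 1) - 1 - (-1 - m).toNat := by
      rw [h4]; omega
    have hMlt : (-1 - m).toNat < 2 ^ (2 * k + 1) := by
      rw [hpp]
      rw [h4] at h1 h2
      omega
    have hc := s_compl (2 * k + 1) _ hMlt
    rw [e1]
    omega

theorem two_sided_thue_morse_overlap_free :
    ¬ ∃ (i : ℤ) (n : ℕ), 1 ≤ n ∧ ∀ j ≤ n, u (i + j) = u (i + n + j) := by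
  rintro ⟨i, n, hn, H⟩
  set k : ℕ := i.natAbs + 2 * n + 1 with hk
  have h4 : (4 : ℤ) ^ k = ((2 ^ (2 * k) : ℕ) : ℤ) := by
    push_cast
    rw [pow_mul]
    norm_num
  set a : ℕ := 2 ^ (2 * k) with ha
  have hka : k < a := by
    calc k < 2 ^ k := Nat.lt_two_pow_self (n := k)
    _ ≤ a := by rw [ha]; exact Nat.pow_le_pow_right (by norm_num) (by omega)
  -- so i.natAbs + 2*n < a
  set I : ℕ := (i + 2 * 4 ^ k).toNat with hI
  apply tm_overlap_free n hn I
  intro j hj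
  have hb1l : -(4 ^ k : ℤ) ≤ i + j := by rw [h4]; omega
  have hb1r : (i + j : ℤ) < 2 * 4 ^ k := by rw [h4]; omega
  have hb2l : -(4 ^ k : ℤ) ≤ i + n + j := by rw [h4]; omega
  have hb2r : (i + n + j : ℤ) < 2 * 4 ^ k := by rw [h4]; omega
  have b1 := u_embed k (i + j) hb1l hb1r
  have b2 := u_embed k (i + n + j) hb2l hb2r
  have e1 : ((i + j : ℤ) + 2 * 4 ^ k).toNat = I + j := by rw [hI, h4]; omega
  have e2 : ((i + n + j : ℤ) + 2 * 4 ^ k).toNat = I + n + j := by rw [hI, h4]; omega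
  rw [e1] at b1
  rw [e2] at b2
  have hH := congrArg Fin.val (H j hj)
  have hv1 : (u (i + j)).val < 2 := (u (i + j)).is_lt
  have hv2 : (u (i + n + j)).val < 2 := (u (i + n + j)).is_lt
  omega
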